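/- (Brown–Walker effective condition number bound.) Let à be a real m×m matrix with N(Ã) = N(Ãᵀ), let b, x₀ ∈ ℝᵐ, r₀ = b − Ãx₀, and let r* = b − b|_{R(Ã)} be the least squares residual of min_x ‖b − Ãx‖₂. For i ≥ 1 let r_{i−1} be the GMRES residual at the (i−1)st iteration, i.e., r_{i−1} = r₀ − Ãz_{i−1} where z_{i−1} minimizes ‖r₀ − Ãz‖₂ over z ∈ K_{i−1}(Ã, r₀), and assume r_{i−1} ≠ r*. Let S = K_i(Ã, r₀) and S̄ = K_i(Ã, r₀) + span{r*}, and define for a subspace W the quantities σ_max(Ã|_W) = sup{‖Ãz‖₂ : z ∈ W, ‖z‖₂ = 1}, σ_min(Ã|_W) = inf{‖Ãz‖₂ : z ∈ W, ‖z‖₂ = 1}, and κ₂(Ã|_W) = σ_max(Ã|_W)/σ_min(Ã|_W). Then κ₂(Ã|_S) ≥ (σ_max(Ã|_S)/σ_max(Ã|_{S̄})) · ‖r_{i−1}‖₂ / √(‖r_{i−1}‖₂² − ‖r*‖₂²). -/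

import Mathlib

open Matrix

/-- The `i`-th Krylov subspace `K_i(A, v) = span {v, Av, …, A^{i-1} v}`. -/
noncomputable def Krylov {m : ℕ} (A : Matrix (Fin m) (Fin m) ℝ)
    (v : EuclideanSpace ℝ (Fin m)) (i : ℕ) : Submodule ℝ (EuclideanSpace ℝ (Fin m)) :=
  Submodule.span ℝ {w | ∃ j < i, w = (A ^ j).toEuclideanLin v}

/-- `σ_max(Ã|_W) = sup {‖Ãz‖ : z ∈ W, ‖z‖ = 1}`. -/
noncomputable def sigmaMax {m : ℕ} (A : Matrix (Fin m) (Fin m) ℝ)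
    (W : Submodule ℝ (EuclideanSpace ℝ (Fin m))) : ℝ :=
  sSup {t | ∃ z ∈ W, ‖z‖ = 1 ∧ t = ‖A.toEuclideanLin z‖}

/-- `σ_min(Ã|_W) = inf {‖Ãz‖ : z ∈ W, ‖z‖ = 1}`. -/
noncomputable def sigmaMin {m : ℕ} (A : Matrix (Fin m) (Fin m) ℝ)
    (W : Submodule ℝ (EuclideanSpace ℝ (Fin m))) : ℝ :=
  sInf {t | ∃ z ∈ W, ‖z‖ = 1 ∧ t = ‖A.toEuclideanLin z‖}

section Aux

variable {m : ℕ}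

lemma toEuclideanLin_mul_apply (A B : Matrix (Fin m) (Fin m) ℝ) (v : EuclideanSpace ℝ (Fin m)) :
    (A * B).toEuclideanLin v = A.toEuclideanLin (B.toEuclideanLin v) := by
  simp [Matrix.toEuclideanLin_apply, Matrix.mulVec_mulVec]

lemma toEuclideanLin_one_apply (v : EuclideanSpace ℝ (Fin m)) :
    (1 : Matrix (Fin m) (Fin m) ℝ).toEuclideanLin v = v := by
  simp [Matrix.toEuclideanLin_apply, Matrix.one_mulVec]

lemma ker_transpose_eq (A : Matrix (Fin m) (Fin m) ℝ) :
    LinearMap.ker (Matrix.toEuclideanLin Aᵀ) = (LinearMap.range (Matrix.toEuclideanLin A))ᗮ := by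
  have hA : Aᵀ = Aᴴ := by ext i j; simp [Matrix.conjTranspose_apply]
  rw [hA, Matrix.toEuclideanLin_conjTranspose_eq_adjoint]
  ext x
  constructor
  · intro hx
    rw [Submodule.mem_orthogonal]
    rintro u ⟨y, rfl⟩
    have h1 : (inner ℝ ((LinearMap.adjoint (Matrix.toEuclideanLin A)) x) y : ℝ)
        = inner ℝ x (Matrix.toEuclideanLin A y) := LinearMap.adjoint_inner_left _ _ _
    rw [LinearMap.mem_ker.mp hx, inner_zero_left] at h1
    rw [real_inner_comm]
    exact h1.symm
  · intro hx
    rw [LinearMap.mem_ker, ← inner_self_eq_zero (𝕜 := ℝ)]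
    have h1 : (inner ℝ ((LinearMap.adjoint (Matrix.toEuclideanLin A)) x)
        ((LinearMap.adjoint (Matrix.toEuclideanLin A)) x) : ℝ)
        = inner ℝ x (Matrix.toEuclideanLin A ((LinearMap.adjoint (Matrix.toEuclideanLin A)) x)) :=
      LinearMap.adjoint_inner_left _ _ _
    rw [h1, real_inner_comm]
    exact (Submodule.mem_orthogonal _ _).mp hx _ ⟨_, rfl⟩

lemma gen_mem_Krylov (A : Matrix (Fin m) (Fin m) ℝ) (v : EuclideanSpace ℝ (Fin m))
    {j i : ℕ} (h : j < i) : (A ^ j).toEuclideanLin v ∈ Krylov A v i :=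
  Submodule.subset_span ⟨j, h, rfl⟩

lemma self_mem_Krylov (A : Matrix (Fin m) (Fin m) ℝ) (v : EuclideanSpace ℝ (Fin m))
    {i : ℕ} (h : 1 ≤ i) : v ∈ Krylov A v i := by
  have := gen_mem_Krylov A v (j := 0) h
  rwa [pow_zero, toEuclideanLin_one_apply] at this

lemma map_mem_Krylov (A : Matrix (Fin m) (Fin m) ℝ) (v : EuclideanSpace ℝ (Fin m))
    {j : ℕ} {x : EuclideanSpace ℝ (Fin m)} (hx : x ∈ Krylov A v j) :
    A.toEuclideanLin x ∈ Krylov A v (j + 1) := by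
  induction hx using Submodule.span_induction with
  | mem w hw =>
    obtain ⟨k, hk, rfl⟩ := hw
    rw [← toEuclideanLin_mul_apply, ← pow_succ']
    exact gen_mem_Krylov A v (Nat.succ_lt_succ hk)
  | zero => simp [Submodule.zero_mem]
  | add a b _ _ ha hb => rw [map_add]; exact Submodule.add_mem _ ha hb
  | smul c a _ ha => rw [_root_.map_smul]; exact Submodule.smul_mem _ c ha

lemma Krylov_mono (A : Matrix (Fin m) (Fin m) ℝ) (v : EuclideanSpace ℝ (Fin m))
    {i j : ℕ} (h : i ≤ j) : Krylov A v i ≤ Krylov A v j :=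
  Submodule.span_mono (fun w ⟨k, hk, hw⟩ => ⟨k, lt_of_lt_of_le hk h, hw⟩)

lemma Krylov_le_sup (A : Matrix (Fin m) (Fin m) ℝ) (v : EuclideanSpace ℝ (Fin m))
    {i : ℕ} (h : 1 ≤ i) :
    Krylov A v i ≤ Submodule.span ℝ {v} ⊔
      Submodule.map A.toEuclideanLin (Krylov A v (i - 1)) := by
  rw [Krylov, Submodule.span_le]
  rintro w ⟨j, hj, rfl⟩
  match j with
  | 0 =>
    rw [pow_zero, toEuclideanLin_one_apply]
    exact Submodule.mem_sup_left (Submodule.mem_span_singleton_self v)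
  | k + 1 =>
    rw [pow_succ', toEuclideanLin_mul_apply]
    exact Submodule.mem_sup_right
      (Submodule.mem_map_of_mem (gen_mem_Krylov A v (by omega)))

lemma bddAbove_sigmaSet (A : Matrix (Fin m) (Fin m) ℝ)
    (W : Submodule ℝ (EuclideanSpace ℝ (Fin m))) :
    BddAbove {t | ∃ z ∈ W, ‖z‖ = 1 ∧ t = ‖A.toEuclideanLin z‖} := by
  refine ⟨‖LinearMap.toContinuousLinearMap A.toEuclideanLin‖, ?_⟩
  rintro t ⟨z, hz, hz1, rfl⟩
  have h := (LinearMap.toContinuousLinearMap A.toEuclideanLin).le_opNorm z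
  rw [hz1, mul_one] at h
  exact h

lemma bddBelow_sigmaSet (A : Matrix (Fin m) (Fin m) ℝ)
    (W : Submodule ℝ (EuclideanSpace ℝ (Fin m))) :
    BddBelow {t | ∃ z ∈ W, ‖z‖ = 1 ∧ t = ‖A.toEuclideanLin z‖} := by
  refine ⟨0, ?_⟩
  rintro t ⟨z, hz, hz1, rfl⟩
  positivity

lemma sigmaMin_attained (A : Matrix (Fin m) (Fin m) ℝ)
    (W : Submodule ℝ (EuclideanSpace ℝ (Fin m)))
    (hW : ∃ z ∈ W, ‖z‖ = 1) :
    ∃ z ∈ W, ‖z‖ = 1 ∧ ‖A.toEuclideanLin z‖ = sigmaMin A W := by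
  have himg : {t | ∃ z ∈ W, ‖z‖ = 1 ∧ t = ‖A.toEuclideanLin z‖}
      = (fun z => ‖A.toEuclideanLin z‖) ''
        ((W : Set (EuclideanSpace ℝ (Fin m))) ∩ Metric.sphere 0 1) := by
    ext t
    simp only [Set.mem_image, Set.mem_inter_iff, Set.mem_setOf_eq, mem_sphere_zero_iff_norm,
      SetLike.mem_coe]
    constructor
    · rintro ⟨z, hz, hz1, rfl⟩; exact ⟨z, ⟨hz, hz1⟩, rfl⟩
    · rintro ⟨z, ⟨hz, hz1⟩, rfl⟩; exact ⟨z, hz, hz1, rfl⟩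
  have hcomp : IsCompact ((W : Set (EuclideanSpace ℝ (Fin m))) ∩ Metric.sphere 0 1) :=
    (isCompact_sphere (0 : EuclideanSpace ℝ (Fin m)) 1).inter_left
      (Submodule.closed_of_finiteDimensional W)
  have hcont : Continuous (fun z : EuclideanSpace ℝ (Fin m) => ‖A.toEuclideanLin z‖) :=
    (LinearMap.continuous_of_finiteDimensional _).norm
  have hne : ((W : Set (EuclideanSpace ℝ (Fin m))) ∩ Metric.sphere 0 1).Nonempty := by
    obtain ⟨z, hz, hz1⟩ := hW
    exact ⟨z, hz, by simpa [mem_sphere_zero_iff_norm] using hz1⟩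
  have hmem := (hcomp.image hcont).sInf_mem (hne.image _)
  rw [← himg] at hmem
  obtain ⟨z, hz, hz1, ht⟩ := hmem
  exact ⟨z, hz, hz1, ht.symm⟩

end Aux

/-- Brown–Walker effective condition number bound:
`κ₂(Ã|_S) ≥ (σ_max(Ã|_S)/σ_max(Ã|_S̄)) · ‖r_{i−1}‖ / √(‖r_{i−1}‖² − ‖r*‖²)`. -/
theorem brown_walker_effective_condition_number_bound
    {m : ℕ} (A : Matrix (Fin m) (Fin m) ℝ) (b x0 r0 bR rstar : EuclideanSpace ℝ (Fin m))
    (i : ℕ) (hi : 1 ≤ i) (z r : EuclideanSpace ℝ (Fin m))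
    (hN : LinearMap.ker A.toEuclideanLin = LinearMap.ker Aᵀ.toEuclideanLin)
    (hr0 : r0 = b - A.toEuclideanLin x0)
    -- `bR` is the orthogonal projection of `b` onto `R(Ã)`, and `r* = b − b|_{R(Ã)}`:
    (hbR : bR ∈ LinearMap.range A.toEuclideanLin)
    (hperp : b - bR ∈ (LinearMap.range A.toEuclideanLin)ᗮ)
    (hrstar : rstar = b - bR)
    -- `z = z_{i−1}` minimizes `‖r₀ − Ãz‖₂` over `K_{i−1}(Ã, r₀)`, and `r_{i−1} = r₀ − Ãz`:
    (hz : z ∈ Krylov A r0 (i - 1))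
    (hzmin : ∀ w ∈ Krylov A r0 (i - 1), ‖r0 - A.toEuclideanLin z‖ ≤ ‖r0 - A.toEuclideanLin w‖)
    (hr : r = r0 - A.toEuclideanLin z)
    (hne : r ≠ rstar) :
    sigmaMax A (Krylov A r0 i) / sigmaMin A (Krylov A r0 i) ≥
      (sigmaMax A (Krylov A r0 i) /
          sigmaMax A (Krylov A r0 i ⊔ Submodule.span ℝ {rstar})) *
        (‖r‖ / Real.sqrt (‖r‖ ^ 2 - ‖rstar‖ ^ 2)) := by
  set R := LinearMap.range A.toEuclideanLin with hRdef
  have hrstar_perp : rstar ∈ Rᗮ := hrstar ▸ hperp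
  have hkerT : LinearMap.ker Aᵀ.toEuclideanLin = Rᗮ := ker_transpose_eq A
  have hArstar : A.toEuclideanLin rstar = 0 := by
    have hmem : rstar ∈ LinearMap.ker A.toEuclideanLin := by
      rw [hN, hkerT]; exact hrstar_perp
    exact LinearMap.mem_ker.mp hmem
  have hsubR : r - rstar ∈ R := by
    have heq : r - rstar = bR - A.toEuclideanLin (x0 + z) := by
      rw [hr, hr0, hrstar, map_add]; abel
    rw [heq]
    exact Submodule.sub_mem _ hbR ⟨x0 + z, rfl⟩
  have hinner : (inner ℝ (r - rstar) rstar : ℝ) = 0 :=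
    (Submodule.mem_orthogonal _ _).mp hrstar_perp _ hsubR
  have hpyth : ‖r‖ ^ 2 = ‖rstar‖ ^ 2 + ‖r - rstar‖ ^ 2 := by
    have hdecomp : r = rstar + (r - rstar) := by abel
    calc ‖r‖ ^ 2 = ‖rstar + (r - rstar)‖ ^ 2 := by rw [← hdecomp]
      _ = ‖rstar‖ ^ 2 + 2 * inner ℝ rstar (r - rstar) + ‖r - rstar‖ ^ 2 := norm_add_sq_real _ _
      _ = ‖rstar‖ ^ 2 + ‖r - rstar‖ ^ 2 := by rw [real_inner_comm, hinner]; ring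
  have hune : r - rstar ≠ 0 := sub_ne_zero.mpr hne
  have hupos : (0 : ℝ) < ‖r - rstar‖ := norm_pos_iff.mpr hune
  have hrpos : (0 : ℝ) < ‖r‖ := by
    nlinarith [hpyth, mul_pos hupos hupos, norm_nonneg rstar, norm_nonneg r, sq_nonneg ‖rstar‖]
  have hsqrt : Real.sqrt (‖r‖ ^ 2 - ‖rstar‖ ^ 2) = ‖r - rstar‖ := by
    rw [hpyth]
    have : ‖rstar‖ ^ 2 + ‖r - rstar‖ ^ 2 - ‖rstar‖ ^ 2 = ‖r - rstar‖ ^ 2 := by ring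
    rw [this, Real.sqrt_sq hupos.le]
  have hrS : r ∈ Krylov A r0 i := by
    rw [hr]
    refine Submodule.sub_mem _ (self_mem_Krylov A r0 hi) ?_
    exact Krylov_mono A r0 (by omega) (map_mem_Krylov A r0 hz)
  set S := Krylov A r0 i with hSdef
  set Sb := Krylov A r0 i ⊔ Submodule.span ℝ {rstar} with hSbdef
  have hrSb : r ∈ Sb := Submodule.mem_sup_left hrS
  have hrstarSb : rstar ∈ Sb := Submodule.mem_sup_right (Submodule.mem_span_singleton_self _)
  -- unit vector in S
  have hz1S : ‖r‖⁻¹ • r ∈ S := Submodule.smul_mem _ _ hrS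
  have hz1n : ‖(‖r‖⁻¹ • r)‖ = 1 := by
    rw [norm_smul, norm_inv, norm_norm, inv_mul_cancel₀ hrpos.ne']
  -- unit vector in Sb
  have hz2Sb : ‖r - rstar‖⁻¹ • (r - rstar) ∈ Sb :=
    Submodule.smul_mem _ _ (Submodule.sub_mem _ hrSb hrstarSb)
  have hz2n : ‖(‖r - rstar‖⁻¹ • (r - rstar))‖ = 1 := by
    rw [norm_smul, norm_inv, norm_norm, inv_mul_cancel₀ hupos.ne']
  -- σ_min(S) * ‖r‖ ≤ ‖Ã r‖
  have hminle : sigmaMin A S * ‖r‖ ≤ ‖A.toEuclideanLin r‖ := by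
    have hmem : ‖A.toEuclideanLin (‖r‖⁻¹ • r)‖ ∈
        {t | ∃ z ∈ S, ‖z‖ = 1 ∧ t = ‖A.toEuclideanLin z‖} := ⟨_, hz1S, hz1n, rfl⟩
    have hle := csInf_le (bddBelow_sigmaSet A S) hmem
    rw [_root_.map_smul, norm_smul, norm_inv, norm_norm] at hle
    calc sigmaMin A S * ‖r‖ ≤ ‖r‖⁻¹ * ‖A.toEuclideanLin r‖ * ‖r‖ :=
          mul_le_mul_of_nonneg_right hle hrpos.le
      _ = ‖A.toEuclideanLin r‖ := by field_simp
  -- ‖Ã r‖ ≤ σ_max(Sb) * ‖r - rstar‖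
  have hAu : A.toEuclideanLin (r - rstar) = A.toEuclideanLin r := by
    rw [map_sub, hArstar, sub_zero]
  have hmaxge : ‖A.toEuclideanLin r‖ ≤ sigmaMax A Sb * ‖r - rstar‖ := by
    have hmem : ‖A.toEuclideanLin (‖r - rstar‖⁻¹ • (r - rstar))‖ ∈
        {t | ∃ z ∈ Sb, ‖z‖ = 1 ∧ t = ‖A.toEuclideanLin z‖} := ⟨_, hz2Sb, hz2n, rfl⟩
    have hle := le_csSup (bddAbove_sigmaSet A Sb) hmem
    rw [_root_.map_smul, hAu, norm_smul, norm_inv, norm_norm] at hle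
    calc ‖A.toEuclideanLin r‖ = ‖r - rstar‖⁻¹ * ‖A.toEuclideanLin r‖ * ‖r - rstar‖ := by
          field_simp
      _ ≤ sigmaMax A Sb * ‖r - rstar‖ := mul_le_mul_of_nonneg_right hle hupos.le
  -- σ_max(S) ≥ 0 and σ_max(Sb) ≥ 0
  have hmaxS_nonneg : 0 ≤ sigmaMax A S :=
    le_trans (norm_nonneg _) (le_csSup (bddAbove_sigmaSet A S) ⟨_, hz1S, hz1n, rfl⟩)
  have hmaxSb_nonneg : 0 ≤ sigmaMax A Sb :=
    le_trans (norm_nonneg _) (le_csSup (bddAbove_sigmaSet A Sb) ⟨_, hz2Sb, hz2n, rfl⟩)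
  -- σ_min(S) > 0 : the stagnation argument
  obtain ⟨v, hvS, hv1, hvmin⟩ := sigmaMin_attained A S ⟨_, hz1S, hz1n⟩
  have hminpos : 0 < sigmaMin A S := by
    rw [← hvmin]
    rcases (norm_nonneg (A.toEuclideanLin v)).lt_or_eq with h | h
    · exact h
    exfalso
    have hAv : A.toEuclideanLin v = 0 := norm_eq_zero.mp h.symm
    have hvperp : v ∈ Rᗮ := by
      rw [← hkerT, ← hN]; exact LinearMap.mem_ker.mpr hAv
    have hv' := Krylov_le_sup A r0 hi hvS
    obtain ⟨y, hy, w, hw, hvy⟩ := Submodule.mem_sup.mp hv'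
    obtain ⟨c, rfl⟩ := Submodule.mem_span_singleton.mp hy
    obtain ⟨z', hz', rfl⟩ := Submodule.mem_map.mp hw
    -- hvy : c • r0 + Ã z' = v
    have hc : c ≠ 0 := by
      intro h0
      rw [h0, zero_smul, zero_add] at hvy
      have hvR : v ∈ R := hvy ▸ ⟨z', rfl⟩
      have hv0 : v = 0 := by
        have := (Submodule.mem_orthogonal _ _).mp hvperp v hvR
        exact inner_self_eq_zero.mp this
      rw [hv0, norm_zero] at hv1
      exact one_ne_zero hv1.symm
    have hw' : (-c⁻¹) • z' ∈ Krylov A r0 (i - 1) := Submodule.smul_mem _ _ hz'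
    have heq : r0 - A.toEuclideanLin ((-c⁻¹) • z') = c⁻¹ • v := by
      rw [← hvy, _root_.map_smul, smul_add, smul_smul, inv_mul_cancel₀ hc, one_smul]
      module
    have h1 : r0 - A.toEuclideanLin ((-c⁻¹) • z') - rstar ∈ R := by
      have heq2 : r0 - A.toEuclideanLin ((-c⁻¹) • z') - rstar
          = bR - A.toEuclideanLin (x0 + (-c⁻¹) • z') := by
        rw [hr0, hrstar, map_add]; abel
      rw [heq2]
      exact Submodule.sub_mem _ hbR ⟨_, rfl⟩
    have h2 : r0 - A.toEuclideanLin ((-c⁻¹) • z') - rstar ∈ Rᗮ := by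
      rw [heq]
      exact Submodule.sub_mem _ (Submodule.smul_mem _ _ hvperp) hrstar_perp
    have h3 : r0 - A.toEuclideanLin ((-c⁻¹) • z') - rstar = 0 :=
      Submodule.disjoint_def.mp R.orthogonal_disjoint _ h1 h2
    have h4 : r0 - A.toEuclideanLin ((-c⁻¹) • z') = rstar := by
      rwa [sub_eq_zero] at h3
    have h5 := hzmin _ hw'
    rw [h4, ← hr] at h5
    have h6 : ‖r‖ ^ 2 ≤ ‖rstar‖ ^ 2 := pow_le_pow_left₀ (norm_nonneg r) h5 2
    have h7 : 0 < ‖r - rstar‖ ^ 2 := pow_pos hupos 2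
    linarith [hpyth]
  -- final arithmetic
  rw [ge_iff_le, hsqrt]
  rcases hmaxSb_nonneg.lt_or_eq with hSbpos | hSb0
  · rw [div_mul_div_comm, div_le_div_iff₀ (mul_pos hSbpos hupos) hminpos]
    have key := mul_le_mul_of_nonneg_left (hminle.trans hmaxge) hmaxS_nonneg
    calc sigmaMax A S * ‖r‖ * sigmaMin A S
        = sigmaMax A S * (sigmaMin A S * ‖r‖) := by ring
      _ ≤ sigmaMax A S * (sigmaMax A Sb * ‖r - rstar‖) := key
  · rw [← hSb0, div_zero, zero_mul]
    exact div_nonneg hmaxS_nonneg hminpos.le
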